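/- Let f : ℝⁿ → ℝ be convex and differentiable with L-Lipschitz gradient, and define x_{k+1} = x_k - (1/L)∇f(x_k). Then for all k ≥ 1 and all x ∈ ℝⁿ: (f(x₁) + ⋯ + f(x_k))/k ≤ f(x) + L‖x₀ - x‖²/(2k). -/

import Mathlib

open scoped RealInnerProductSpace
open Finset

section Aux

variable {E : Type*} [NormedAddCommGroup E] [InnerProductSpace ℝ E] [CompleteSpace E]

lemma gm_line_hasDerivAt (f : E → ℝ) {g : E} (a v : E) (t : ℝ)
    (h : HasGradientAt f g (a + t • v)) :
    HasDerivAt (fun s : ℝ => f (a + s • v)) ⟪g, v⟫ t := by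
  have hc : HasDerivAt (fun s : ℝ => a + s • v) v t := by
    simpa using ((hasDerivAt_id t).smul_const v).const_add a
  have := h.hasFDerivAt.comp_hasDerivAt t hc
  simp [InnerProductSpace.toDual_apply_apply] at this
  exact this

lemma gm_convex_grad_ineq (f : E → ℝ) (hconv : ConvexOn ℝ Set.univ f)
    {g : E} {p : E} (h : HasGradientAt f g p) (y : E) :
    f p + ⟪g, y - p⟫ ≤ f y := by
  have hφ : HasDerivAt (fun s : ℝ => f (p + s • (y - p))) ⟪g, y - p⟫ 0 :=
    gm_line_hasDerivAt f p (y - p) 0 (by simpa using h)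
  have hslope := hasDerivAt_iff_tendsto_slope.mp hφ
  have h1 : Filter.Tendsto (slope (fun s : ℝ => f (p + s • (y - p))) 0)
      (nhdsWithin 0 (Set.Ioi 0)) (nhds ⟪g, y - p⟫) :=
    hslope.mono_left (nhdsWithin_mono _ (fun t ht => ne_of_gt ht))
  have key : ⟪g, y - p⟫ ≤ f y - f p := by
    refine le_of_tendsto h1 ?_
    filter_upwards [Ioc_mem_nhdsGT
      (one_pos : (0:ℝ) < 1)] with t ht
    have ht0 : (0:ℝ) < t := ht.1
    have ht1 : t ≤ 1 := ht.2
    have hcv := hconv.2 (Set.mem_univ p) (Set.mem_univ y)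
      (by linarith : (0:ℝ) ≤ 1 - t) ht0.le (by ring)
    have heq : p + t • (y - p) = (1 - t) • p + t • y := by module
    rw [slope_def_field]
    simp only [zero_smul, add_zero, sub_zero]
    rw [div_le_iff₀ ht0, heq]
    simp only [smul_eq_mul] at hcv
    nlinarith [hcv]
  linarith

lemma gm_descent (f : E → ℝ) (f' : E → E) (L : ℝ) (hL : 0 < L)
    (hdiff : ∀ x, HasGradientAt f (f' x) x)
    (hlip : ∀ x y, ‖f' x - f' y‖ ≤ L * ‖x - y‖) (p y : E) :
    f y ≤ f p + ⟪f' p, y - p⟫ + L / 2 * ‖y - p‖ ^ 2 := by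
  set v := y - p with hv
  set ψ : ℝ → ℝ := fun t => f (p + t • v) - t * ⟪f' p, v⟫ - L / 2 * t ^ 2 * ‖v‖ ^ 2 with hψ
  have hψd : ∀ t : ℝ, HasDerivAt ψ
      (⟪f' (p + t • v), v⟫ - ⟪f' p, v⟫ - L * t * ‖v‖ ^ 2) t := by
    intro t
    have h1 := gm_line_hasDerivAt f p v t (hdiff (p + t • v))
    have h2 : HasDerivAt (fun s : ℝ => s * ⟪f' p, v⟫) ⟪f' p, v⟫ t := by
      simpa using (hasDerivAt_id t).mul_const ⟪f' p, v⟫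
    have h3 : HasDerivAt (fun s : ℝ => L / 2 * s ^ 2 * ‖v‖ ^ 2) (L * t * ‖v‖ ^ 2) t := by
      have := ((hasDerivAt_pow 2 t).const_mul (L / 2)).mul_const (‖v‖ ^ 2)
      exact this.congr_deriv (by push_cast; ring)
    exact (h1.sub h2).sub h3
  have hanti : AntitoneOn ψ (Set.Icc 0 1) := by
    apply antitoneOn_of_deriv_nonpos (convex_Icc (0:ℝ) 1)
    · exact fun t _ => ((hψd t).continuousAt.continuousWithinAt)
    · intro t _
      exact ((hψd t).differentiableAt).differentiableWithinAt
    · intro t ht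
      rw [interior_Icc] at ht
      rw [(hψd t).deriv]
      have hb : ⟪f' (p + t • v) - f' p, v⟫ ≤ L * t * ‖v‖ ^ 2 := by
        calc ⟪f' (p + t • v) - f' p, v⟫ ≤ ‖f' (p + t • v) - f' p‖ * ‖v‖ :=
              real_inner_le_norm _ _
          _ ≤ (L * ‖(p + t • v) - p‖) * ‖v‖ := by
              have := hlip (p + t • v) p
              have hv0 : (0:ℝ) ≤ ‖v‖ := norm_nonneg _
              nlinarith [norm_nonneg (f' (p + t • v) - f' p)]
          _ = L * t * ‖v‖ ^ 2 := by
              have : p + t • v - p = t • v := by abel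
              rw [this, norm_smul, Real.norm_eq_abs, abs_of_pos ht.1]
              ring
      rw [inner_sub_left] at hb
      linarith
  have h01 := hanti (Set.left_mem_Icc.2 zero_le_one) (Set.right_mem_Icc.2 zero_le_one)
    zero_le_one
  have hψ0 : ψ 0 = f p := by simp [hψ]
  have hψ1 : ψ 1 = f y - ⟪f' p, v⟫ - L / 2 * ‖v‖ ^ 2 := by
    simp [hψ, hv]
  rw [hψ0, hψ1] at h01
  linarith

end Aux

theorem gradient_method_average_bound
    {E : Type*} [NormedAddCommGroup E] [InnerProductSpace ℝ E] [CompleteSpace E]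
    (f : E → ℝ) (f' : E → E) (L : ℝ) (hL : 0 < L)
    (hconv : ConvexOn ℝ Set.univ f)
    (hdiff : ∀ x : E, HasGradientAt f (f' x) x)
    (hlip : ∀ x y : E, ‖f' x - f' y‖ ≤ L * ‖x - y‖)
    (x : ℕ → E) (hrec : ∀ k, x (k + 1) = x k - (1 / L) • f' (x k)) :
    ∀ k : ℕ, 1 ≤ k → ∀ y : E,
      (∑ i ∈ Icc 1 k, f (x i)) / k ≤ f y + L * ‖x 0 - y‖ ^ 2 / (2 * k) := by
  intro k hk y
  have hL' : L ≠ 0 := ne_of_gt hL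
  -- per-step inequality
  have step : ∀ i : ℕ,
      f (x (i + 1)) ≤ f y + L / 2 * (‖x i - y‖ ^ 2 - ‖x (i + 1) - y‖ ^ 2) := by
    intro i
    set g := f' (x i) with hg
    have hd := gm_descent f f' L hL hdiff hlip (x i) (x (i + 1))
    have hcv := gm_convex_grad_ineq f hconv (hdiff (x i)) y
    -- rewrite x (i+1) using recursion
    have hx1 : x (i + 1) - x i = -((1 / L) • g) := by rw [hrec i]; abel
    have hx2 : x (i + 1) - y = (x i - y) - (1 / L) • g := by rw [hrec i]; abel
    set a := x i - y with ha
    have e1 : ⟪g, x (i + 1) - x i⟫ = -(1 / L) * ‖g‖ ^ 2 := by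
      rw [hx1, inner_neg_right, real_inner_smul_right, real_inner_self_eq_norm_sq]
      ring
    have e2 : ‖x (i + 1) - x i‖ ^ 2 = (1 / L) ^ 2 * ‖g‖ ^ 2 := by
      rw [hx1, norm_neg, norm_smul, mul_pow, Real.norm_eq_abs, sq_abs]
    have e3 : ‖x (i + 1) - y‖ ^ 2 = ‖a‖ ^ 2 - 2 * ((1 / L) * ⟪g, a⟫) + (1 / L) ^ 2 * ‖g‖ ^ 2 := by
      rw [hx2, norm_sub_sq_real, real_inner_smul_right, norm_smul,
        Real.norm_eq_abs, mul_pow, sq_abs, real_inner_comm]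
    have e4 : ⟪g, y - x i⟫ = -⟪g, a⟫ := by
      rw [ha, ← inner_neg_right]; congr 1; abel
    rw [e1, e2] at hd
    rw [e4] at hcv
    rw [e3]
    have hfin : -(1 / L) * ‖g‖ ^ 2 + L / 2 * ((1 / L) ^ 2 * ‖g‖ ^ 2) + ⟪g, a⟫
        = L / 2 * (‖a‖ ^ 2 - (‖a‖ ^ 2 - 2 * ((1 / L) * ⟪g, a⟫) + (1 / L) ^ 2 * ‖g‖ ^ 2)) := by
      field_simp
      ring
    linarith
  have hk0 : (0:ℝ) < (k : ℝ) := by exact_mod_cast Nat.lt_of_lt_of_le Nat.zero_lt_one hk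
  have hsum : (∑ i ∈ Icc 1 k, f (x i))
      ≤ (k : ℝ) * f y + L / 2 * (‖x 0 - y‖ ^ 2 - ‖x k - y‖ ^ 2) := by
    have hIcc : (∑ i ∈ Icc 1 k, f (x i)) = ∑ i ∈ range k, f (x (i + 1)) := by
      rw [show Icc 1 k = Ico 1 (k + 1) by rw [Finset.Ico_add_one_right_eq_Icc],
        Finset.sum_Ico_eq_sum_range]
      simp [add_comm 1]
    rw [hIcc]
    calc ∑ i ∈ range k, f (x (i + 1))
        ≤ ∑ i ∈ range k, (f y + L / 2 * (‖x i - y‖ ^ 2 - ‖x (i + 1) - y‖ ^ 2)) :=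
          Finset.sum_le_sum fun i _ => step i
      _ = (k : ℝ) * f y + L / 2 * (‖x 0 - y‖ ^ 2 - ‖x k - y‖ ^ 2) := by
          rw [Finset.sum_add_distrib, Finset.sum_const, ← Finset.mul_sum,
            Finset.sum_range_sub' (fun i => ‖x i - y‖ ^ 2) k]
          simp [nsmul_eq_mul]
  rw [div_le_iff₀ hk0]
  have hxk : 0 ≤ ‖x k - y‖ ^ 2 := sq_nonneg _
  have : (f y + L * ‖x 0 - y‖ ^ 2 / (2 * ↑k)) * ↑k
      = (k : ℝ) * f y + L / 2 * ‖x 0 - y‖ ^ 2 := by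
    field_simp
  rw [this]
  nlinarith [sq_nonneg ‖x 0 - y‖]
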